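/- Let F be a field of characteristic zero, K = F(t), and δ the derivation on K with δ(a) = 0 for a ∈ F and δ(t) = t. Let A = {a ∈ K : δ(y) = nay has a nonzero solution in K for some n ∈ ℕ}. Then F ∩ A = ℚ. -/

import Mathlib

open Polynomial

private lemma coeff_X_mul_deriv {F : Type*} [Field F] (Q : F[X]) (k : ℕ) :
    (X * derivative Q).coeff k = k * Q.coeff k := by
  cases k with
  | zero => simp
  | succ m =>
    rw [coeff_X_mul, coeff_derivative]
    push_cast
    ring

private lemma natDegree_X_mul_deriv_le {F : Type*} [Field F] (Q : F[X]) :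
    (X * derivative Q).natDegree ≤ Q.natDegree := by
  rcases Nat.eq_zero_or_pos Q.natDegree with h | h
  · simp [derivative_of_natDegree_zero h]
  · calc (X * derivative Q).natDegree ≤ X.natDegree + (derivative Q).natDegree :=
        natDegree_mul_le
    _ ≤ 1 + (Q.natDegree - 1) := by
        gcongr
        · exact le_of_eq natDegree_X
        · exact natDegree_derivative_le Q
    _ = Q.natDegree := by omega

/-- Let `K = F(t)` with the derivation `δ` vanishing on `F` and `δ(t) = t`,
and let `A = {a : δ(y) = n a y has a nonzero solution in K for some n ≥ 1}`.
Then `F ∩ A = ℚ`. -/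
theorem stmt14 {F : Type*} [Field F] [CharZero F]
    (δ : RatFunc F → RatFunc F)
    (hadd : ∀ x y : RatFunc F, δ (x + y) = δ x + δ y)
    (hmul : ∀ x y : RatFunc F, δ (x * y) = δ x * y + x * δ y)
    (hF : ∀ a : F, δ (algebraMap F (RatFunc F) a) = 0)
    (ht : δ RatFunc.X = RatFunc.X) :
    ∀ a : F,
      (∃ n : ℕ, 0 < n ∧ ∃ y : RatFunc F, y ≠ 0 ∧
        δ y = (n : RatFunc F) * algebraMap F (RatFunc F) a * y) ↔
      ∃ q : ℚ, a = (q : F) := by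
  have hδ1 : δ 1 = 0 := by
    have h := hmul 1 1
    simp only [mul_one, one_mul] at h
    exact (left_eq_add.mp h)
  have hXpow : ∀ k : ℕ, δ (RatFunc.X ^ k) = (k : RatFunc F) * RatFunc.X ^ k := by
    intro k
    induction k with
    | zero => simpa using hδ1
    | succ m ih =>
      rw [pow_succ, hmul, ih, ht]
      push_cast
      ring
  have hinv : ∀ x : RatFunc F, x ≠ 0 → δ x⁻¹ = -δ x * (x⁻¹) ^ 2 := by
    intro x hx
    have h := hmul x x⁻¹
    rw [mul_inv_cancel₀ hx, hδ1] at h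
    have hx1 : x⁻¹ * x = 1 := inv_mul_cancel₀ hx
    calc δ x⁻¹ = x⁻¹ * (x * δ x⁻¹) := by rw [← mul_assoc, hx1, one_mul]
      _ = x⁻¹ * (-(δ x * x⁻¹)) := by rw [eq_neg_of_add_eq_zero_right h.symm]
      _ = -δ x * x⁻¹ ^ 2 := by ring
  have hzpow : ∀ m : ℤ, δ (RatFunc.X ^ m) = (m : RatFunc F) * RatFunc.X ^ m := by
    intro m
    cases m with
    | ofNat k => simpa using hXpow k
    | negSucc k =>
      rw [zpow_negSucc, hinv _ (pow_ne_zero _ RatFunc.X_ne_zero), hXpow, Int.cast_negSucc]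
      have hX : (RatFunc.X : RatFunc F) ^ (k + 1) ≠ 0 := pow_ne_zero _ RatFunc.X_ne_zero
      field_simp
  have hpoly : ∀ p : F[X], δ (algebraMap F[X] (RatFunc F) p)
      = algebraMap F[X] (RatFunc F) (X * derivative p) := by
    intro p
    induction p using Polynomial.induction_on' with
    | add p q hp hq =>
      rw [map_add, hadd, hp, hq, derivative_add, mul_add, map_add]
    | monomial n b =>
      have hC : ∀ c : F, δ (RatFunc.C c) = 0 := fun c => hF c
      rw [← C_mul_X_pow_eq_monomial, derivative_C_mul, derivative_X_pow,
        map_mul, map_pow, RatFunc.algebraMap_C, RatFunc.algebraMap_X, hmul, hC, hXpow]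
      cases n with
      | zero => simp
      | succ m =>
        simp only [Nat.add_sub_cancel, map_mul, map_pow, RatFunc.algebraMap_C,
          RatFunc.algebraMap_X, map_natCast]
        push_cast
        ring
  intro a
  constructor
  · rintro ⟨n, hn, y, hy0, hδy⟩
    set P := y.num with hP
    set Q := y.denom with hQdef
    have hQ0 : Q ≠ 0 := y.denom_ne_zero
    have hP0 : P ≠ 0 := RatFunc.num_ne_zero hy0
    have hQm : algebraMap F[X] (RatFunc F) Q ≠ 0 :=
      RatFunc.algebraMap_ne_zero hQ0
    have hyQ : y * algebraMap F[X] (RatFunc F) Q = algebraMap F[X] (RatFunc F) P := by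
      conv_lhs => rw [← RatFunc.num_div_denom y]
      exact div_mul_cancel₀ _ hQm
    have key := hmul y (algebraMap F[X] (RatFunc F) Q)
    rw [hyQ, hδy, hpoly, hpoly] at key
    have key2 : algebraMap F[X] (RatFunc F) (X * derivative P) * algebraMap F[X] (RatFunc F) Q
        = (n : RatFunc F) * algebraMap F (RatFunc F) a * algebraMap F[X] (RatFunc F) P
            * algebraMap F[X] (RatFunc F) Q
          + algebraMap F[X] (RatFunc F) P * algebraMap F[X] (RatFunc F) (X * derivative Q) := by
      linear_combination (algebraMap F[X] (RatFunc F) Q) * key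
        + ((n : RatFunc F) * algebraMap F (RatFunc F) a * algebraMap F[X] (RatFunc F) Q
            + algebraMap F[X] (RatFunc F) (X * derivative Q)) * hyQ
    have keyP : (X * derivative P) * Q
        = (n : F[X]) * C a * (P * Q) + P * (X * derivative Q) := by
      apply RatFunc.algebraMap_injective F
      simp only [map_mul, map_add, map_natCast, map_pow, RatFunc.algebraMap_C,
        RatFunc.algebraMap_eq_C] at key2 ⊢
      linear_combination key2
    set d := P.natDegree with hd
    set e := Q.natDegree with he
    have hc := congrArg (fun p : F[X] => p.coeff (d + e)) keyP
    rw [coeff_mul_add_eq_of_natDegree_le (natDegree_X_mul_deriv_le P) le_rfl,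
      coeff_X_mul_deriv] at hc
    have h2 : ((n : F[X]) * C a * (P * Q) + P * (X * derivative Q)).coeff (d + e)
        = (n : F) * a * (P.coeff d * Q.coeff e) + P.coeff d * ((e : F) * Q.coeff e) := by
      rw [coeff_add, coeff_mul_add_eq_of_natDegree_le le_rfl (natDegree_X_mul_deriv_le Q),
        coeff_X_mul_deriv]
      have : (n : F[X]) * C a = C ((n : F) * a) := by
        rw [map_mul, map_natCast (C : F →+* F[X]) n]
      rw [this, coeff_C_mul, ← hd, ← he, coeff_mul_degree_add_degree]
      ring_nf
      rfl
    rw [h2] at hc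
    have hlc : P.coeff d * Q.coeff e ≠ 0 :=
      mul_ne_zero (mt leadingCoeff_eq_zero.mp hP0) (mt leadingCoeff_eq_zero.mp hQ0)
    have hna : (n : F) * a = (d : F) - (e : F) := by
      have h3 : ((n : F) * a - ((d : F) - (e : F))) * (P.coeff d * Q.coeff e) = 0 := by
        linear_combination -hc
      rcases mul_eq_zero.mp h3 with h | h
      · exact sub_eq_zero.mp h
      · exact absurd h hlc
    have hnF : (n : F) ≠ 0 := Nat.cast_ne_zero.mpr hn.ne'
    refine ⟨((d : ℚ) - (e : ℚ)) / (n : ℚ), ?_⟩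
    have hnQ : (n : ℚ) ≠ 0 := Nat.cast_ne_zero.mpr hn.ne'
    push_cast
    field_simp
    linear_combination hna
  · rintro ⟨q, rfl⟩
    refine ⟨q.den, q.pos, RatFunc.X ^ (q.num : ℤ), zpow_ne_zero _ RatFunc.X_ne_zero, ?_⟩
    have : CharZero (RatFunc F) :=
      charZero_of_injective_algebraMap (algebraMap F (RatFunc F)).injective
    rw [hzpow]
    rw [map_ratCast (algebraMap F (RatFunc F)) q]
    congr 1
    have hden : ((q.den : ℚ) : RatFunc F) ≠ 0 := by
      exact_mod_cast (Nat.cast_ne_zero (R := RatFunc F)).mpr q.den_nz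
    rw [Rat.cast_def]
    field_simp
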